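/- Let A be a skew-symmetric matrix indexed by an ordered finite set γ = (v₁,...,vₙ), and let α, β be subsets with α ∪ β = γ. Write M = (α \ β) ∪ (β \ α) = {v_{i₁},...,v_{i_t}} (listed in increasing order). Then ∑_{τ=1}^{t} (−1)^τ · Pf(α △ {v_{i_τ}}) · Pf(β △ {v_{i_τ}}) = 0, where Pf(S) denotes the Pfaffian of the submatrix of A indexed by S (with the inherited order), and △ denotes symmetric difference. -/

import Mathlib

open Finset

open scoped Classical in
/-- An (ordered) matching on `Fin n`: a set of arcs `(i,j)` with `i < j`,
pairwise vertex-disjoint. -/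
def IsMatching {n : ℕ} (μ : Finset (Fin n × Fin n)) : Prop :=
  (∀ p ∈ μ, p.1 < p.2) ∧
    ∀ p ∈ μ, ∀ q ∈ μ, p ≠ q → ({p.1, p.2} ∩ {q.1, q.2} : Finset (Fin n)) = ∅

/-- The set of vertices covered by a matching. -/
def cover {n : ℕ} (μ : Finset (Fin n × Fin n)) : Finset (Fin n) :=
  μ.biUnion fun p => {p.1, p.2}

/-- The number of crossings of a matching: pairs of arcs `{a,c}`, `{b,d}` with
`a < b < c < d`. -/
def crossings {n : ℕ} (μ : Finset (Fin n × Fin n)) : ℕ :=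
  ((μ ×ˢ μ).filter fun pq => pq.1.1 < pq.2.1 ∧ pq.2.1 < pq.1.2 ∧ pq.1.2 < pq.2.2).card

open scoped Classical in
/-- The Pfaffian of the principal submatrix of a skew-symmetric matrix `A`
indexed by the subset `S` (with the inherited order), defined as the signed sum
over perfect matchings of `S`.  `mpf A ∅ = 1` and `mpf A S = 0` for `|S|` odd. -/
noncomputable def mpf {n : ℕ} {R : Type*} [CommRing R]
    (A : Matrix (Fin n) (Fin n) R) (S : Finset (Fin n)) : R :=
  ∑ μ ∈ Finset.univ.filter
      (fun μ : Finset (Fin n × Fin n) => IsMatching μ ∧ cover μ = S),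
    (-1 : R) ^ crossings μ * ∏ p ∈ μ, A p.1 p.2

/-- Symmetric difference of finite sets. -/
def sd {n : ℕ} (X Y : Finset (Fin n)) : Finset (Fin n) := (X ∪ Y) \ (X ∩ Y)

/-- `posSum M Y = Σ(Y,M)`: the sum over `y ∈ Y` of the (1-based) position of `y`
in the increasing enumeration of `M`. -/
def posSum {n : ℕ} (M Y : Finset (Fin n)) : ℕ :=
  ∑ y ∈ Y, (M.filter fun z => z ≤ y).card

section Ohta

variable {n : ℕ} {R : Type*} [CommRing R]

open scoped Classical

/-- number of elements of `S` less than `v` -/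
noncomputable def sLT (S : Finset (Fin n)) (v : Fin n) : ℕ := (S.filter (fun z => z < v)).card

/-- unordered crossing relation -/
def xu {n : ℕ} (p q : Fin n × Fin n) : Prop :=
  (p.1 < q.1 ∧ q.1 < p.2 ∧ p.2 < q.2) ∨ (q.1 < p.1 ∧ p.1 < q.2 ∧ q.2 < p.2)

lemma mem_cover {μ : Finset (Fin n × Fin n)} {x : Fin n} :
    x ∈ cover μ ↔ ∃ p ∈ μ, x = p.1 ∨ x = p.2 := by
  simp [cover]

lemma isMatching_subset {μ ν : Finset (Fin n × Fin n)} (h : IsMatching μ) (hs : ν ⊆ μ) :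
    IsMatching ν :=
  ⟨fun p hp => h.1 p (hs hp), fun p hp q hq hpq => h.2 p (hs hp) q (hs hq) hpq⟩

lemma matching_ne {μ : Finset (Fin n × Fin n)} (h : IsMatching μ) {p q : Fin n × Fin n}
    (hp : p ∈ μ) (hq : q ∈ μ) (hpq : p ≠ q) :
    p.1 ≠ q.1 ∧ p.1 ≠ q.2 ∧ p.2 ≠ q.1 ∧ p.2 ≠ q.2 := by
  have h2 := h.2 p hp q hq hpq
  rw [Finset.eq_empty_iff_forall_notMem] at h2
  refine ⟨?_, ?_, ?_, ?_⟩ <;> intro he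
  · exact h2 p.1 (by simp [he])
  · exact h2 p.1 (by simp [he])
  · exact h2 p.2 (by simp [he])
  · exact h2 p.2 (by simp [he])

lemma arc_unique {μ : Finset (Fin n × Fin n)} (h : IsMatching μ) {p q : Fin n × Fin n}
    (hp : p ∈ μ) (hq : q ∈ μ) {x : Fin n}
    (hxp : x = p.1 ∨ x = p.2) (hxq : x = q.1 ∨ x = q.2) : p = q := by
  by_contra hne
  obtain ⟨h1, h2, h3, h4⟩ := matching_ne h hp hq hne
  rcases hxp with rfl | rfl <;> rcases hxq with h' | h' <;> simp_all

lemma cover_insert (p : Fin n × Fin n) (μ : Finset (Fin n × Fin n)) :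
    cover (insert p μ) = insert p.1 (insert p.2 (cover μ)) := by
  ext x; simp [cover]

lemma cover_erase {μ : Finset (Fin n × Fin n)} {p : Fin n × Fin n}
    (h : IsMatching μ) (hp : p ∈ μ) :
    cover (μ.erase p) = cover μ \ {p.1, p.2} := by
  ext x
  simp only [mem_cover, Finset.mem_erase, Finset.mem_sdiff, Finset.mem_insert,
    Finset.mem_singleton]
  constructor
  · rintro ⟨q, ⟨hqp, hq⟩, hx⟩
    refine ⟨⟨q, hq, hx⟩, ?_⟩
    obtain ⟨h1, h2, h3, h4⟩ := matching_ne h hq hp hqp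
    rcases hx with rfl | rfl <;> tauto
  · rintro ⟨⟨q, hq, hx⟩, hnx⟩
    refine ⟨q, ⟨?_, hq⟩, hx⟩
    rintro rfl
    rcases hx with rfl | rfl <;> tauto

lemma crossings_insert {μ : Finset (Fin n × Fin n)} {p : Fin n × Fin n}
    (hp : p ∉ μ) :
    crossings (insert p μ) = crossings μ + (μ.filter (fun q => xu p q)).card := by
  unfold crossings
  rw [Finset.card_filter, Finset.card_filter, Finset.card_filter,
    Finset.sum_product, Finset.sum_product]
  dsimp only
  rw [Finset.sum_insert hp]
  have hpp : (if p.1 < p.1 ∧ p.1 < p.2 ∧ p.2 < p.2 then 1 else 0) = 0 := by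
    simp [lt_irrefl]
  rw [Finset.sum_insert hp, hpp]
  have hsplit : ∀ a ∈ μ, (∑ b ∈ insert p μ,
      if a.1 < b.1 ∧ b.1 < a.2 ∧ a.2 < b.2 then 1 else 0) =
      (if a.1 < p.1 ∧ p.1 < a.2 ∧ a.2 < p.2 then 1 else 0) +
      ∑ b ∈ μ, (if a.1 < b.1 ∧ b.1 < a.2 ∧ a.2 < b.2 then 1 else 0) := by
    intro a _; rw [Finset.sum_insert hp]
  rw [Finset.sum_congr rfl hsplit, Finset.sum_add_distrib]
  have hcomb : (∑ b ∈ μ, if p.1 < b.1 ∧ b.1 < p.2 ∧ p.2 < b.2 then 1 else 0) +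
      (∑ a ∈ μ, if a.1 < p.1 ∧ p.1 < a.2 ∧ a.2 < p.2 then 1 else 0) =
      ∑ q ∈ μ, (if xu p q then 1 else 0) := by
    rw [← Finset.sum_add_distrib]
    refine Finset.sum_congr rfl fun q _ => ?_
    unfold xu
    by_cases h1 : p.1 < q.1 ∧ q.1 < p.2 ∧ p.2 < q.2 <;>
      by_cases h2 : q.1 < p.1 ∧ p.1 < q.2 ∧ q.2 < p.2
    · exact absurd (lt_trans h1.1 h2.1) (lt_irrefl _)
    · simp [h1, h2]
    · simp [h1, h2]
    · simp [h1, h2]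
  omega


lemma cross_count_parity {μ : Finset (Fin n × Fin n)} (h : IsMatching μ) {p : Fin n × Fin n}
    (h1c : p.1 ∉ cover μ) (h2c : p.2 ∉ cover μ) :
    (μ.filter (fun q => xu p q)).card % 2
      = ((cover μ).filter (fun x => p.1 < x ∧ x < p.2)).card % 2 := by
  have hcov : ((cover μ).filter (fun x => p.1 < x ∧ x < p.2)).card
      = ∑ q ∈ μ, (({q.1, q.2} : Finset (Fin n)).filter (fun x => p.1 < x ∧ x < p.2)).card := by
    unfold cover
    rw [Finset.filter_biUnion]
    exact Finset.card_biUnion (fun q hq r hr hqr =>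
      Finset.disjoint_filter_filter
        (Finset.disjoint_iff_inter_eq_empty.mpr (h.2 q hq r hr hqr)))
  rw [hcov, Finset.card_filter, Finset.sum_nat_mod μ 2 _, Finset.sum_nat_mod μ 2
    (fun q => (({q.1, q.2} : Finset (Fin n)).filter (fun x => p.1 < x ∧ x < p.2)).card)]
  congr 1
  refine Finset.sum_congr rfl fun q hq => ?_
  have hq12 : q.1 < q.2 := h.1 q hq
  have e11 : p.1 ≠ q.1 := fun he => h1c (mem_cover.2 ⟨q, hq, Or.inl he⟩)
  have e12 : p.1 ≠ q.2 := fun he => h1c (mem_cover.2 ⟨q, hq, Or.inr he⟩)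
  have e21 : p.2 ≠ q.1 := fun he => h2c (mem_cover.2 ⟨q, hq, Or.inl he⟩)
  have e22 : p.2 ≠ q.2 := fun he => h2c (mem_cover.2 ⟨q, hq, Or.inr he⟩)
  have hcard : (({q.1, q.2} : Finset (Fin n)).filter (fun x => p.1 < x ∧ x < p.2)).card
      = (if p.1 < q.1 ∧ q.1 < p.2 then 1 else 0) + (if p.1 < q.2 ∧ q.2 < p.2 then 1 else 0) := by
    rw [Finset.card_filter,
      Finset.sum_insert (by simp [ne_of_lt hq12] : q.1 ∉ ({q.2} : Finset (Fin n))),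
      Finset.sum_singleton]
  rw [hcard]
  have v11 : p.1.val ≠ q.1.val := fun hv => e11 (Fin.val_injective hv)
  have v12 : p.1.val ≠ q.2.val := fun hv => e12 (Fin.val_injective hv)
  have v21 : p.2.val ≠ q.1.val := fun hv => e21 (Fin.val_injective hv)
  have v22 : p.2.val ≠ q.2.val := fun hv => e22 (Fin.val_injective hv)
  have hv12 : q.1.val < q.2.val := hq12
  simp only [xu, Fin.lt_def]
  split_ifs <;> omega

lemma sLT_erase {S : Finset (Fin n)} {x : Fin n} (hx : x ∈ S) (y : Fin n) :
    sLT S y = sLT (S.erase x) y + (if x < y then 1 else 0) := by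
  unfold sLT
  rw [Finset.card_filter, Finset.card_filter, ← Finset.sum_erase_add S _ hx]

lemma sLT_split {S : Finset (Fin n)} {v j : Fin n} (hvj : v < j) :
    sLT S j = sLT S v + (if v ∈ S then 1 else 0)
      + (S.filter (fun x => v < x ∧ x < j)).card := by
  unfold sLT
  rw [Finset.card_filter, Finset.card_filter, Finset.card_filter]
  have hv : (if v ∈ S then 1 else 0) = ∑ x ∈ S, if x = v then 1 else 0 := by
    rw [Finset.sum_ite_eq' S v (fun _ => 1)]
  rw [hv, ← Finset.sum_add_distrib, ← Finset.sum_add_distrib]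
  refine Finset.sum_congr rfl fun x hx => ?_
  have hvjv : v.val < j.val := hvj
  simp only [Fin.lt_def, Fin.ext_iff]
  split_ifs <;> omega

lemma filter_interval_erase {T : Finset (Fin n)} {j : Fin n} {P : Fin n → Prop}
    [DecidablePred P] (hj : ¬ P j) : (T.erase j).filter P = T.filter P := by
  ext x
  simp only [Finset.mem_filter, Finset.mem_erase]
  constructor
  · rintro ⟨⟨_, hx⟩, hP⟩; exact ⟨hx, hP⟩
  · rintro ⟨hx, hP⟩; exact ⟨⟨fun he => hj (he ▸ hP), hx⟩, hP⟩


lemma neg_one_pow_congr_mod {m k : ℕ} (h : m % 2 = k % 2) : ((-1 : R)) ^ m = (-1 : R) ^ k := by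
  rw [← Nat.div_add_mod m 2, ← Nat.div_add_mod k 2, h, pow_add, pow_add,
    pow_mul, pow_mul, neg_one_sq, one_pow, one_pow]

/-- the ordered arc with endpoints `v`, `j` -/
def arcm {n : ℕ} (v j : Fin n) : Fin n × Fin n := if v < j then (v, j) else (j, v)

lemma arcm_lt {v j : Fin n} (h : v ≠ j) : (arcm v j).1 < (arcm v j).2 := by
  unfold arcm
  rcases lt_trichotomy v j with h1 | h1 | h1
  · simp [h1]
  · exact absurd h1 h
  · simp [not_lt_of_gt h1, h1]

lemma arcm_inj {v j1 j2 : Fin n} (h1 : v ≠ j1) (h2 : v ≠ j2)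
    (h : arcm v j1 = arcm v j2) : j1 = j2 := by
  unfold arcm at h
  split_ifs at h <;> rw [Prod.ext_iff] at h <;> simp at h <;> tauto

lemma matching_insert {μ' : Finset (Fin n × Fin n)} (hm : IsMatching μ')
    {p : Fin n × Fin n} (hp12 : p.1 < p.2)
    (h1 : p.1 ∉ cover μ') (h2 : p.2 ∉ cover μ') :
    IsMatching (insert p μ') ∧ p ∉ μ' := by
  have hpμ : p ∉ μ' := fun hin => h1 (mem_cover.2 ⟨p, hin, Or.inl rfl⟩)
  refine ⟨⟨?_, ?_⟩, hpμ⟩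
  · intro q hq
    rcases Finset.mem_insert.1 hq with rfl | hq'
    · exact hp12
    · exact hm.1 q hq'
  · intro q hq r hr hqr
    have key : ∀ r' ∈ μ', ({p.1, p.2} ∩ {r'.1, r'.2} : Finset (Fin n)) = ∅ := by
      intro r' hr'
      rw [Finset.eq_empty_iff_forall_notMem]
      intro x hx
      simp only [Finset.mem_inter, Finset.mem_insert, Finset.mem_singleton] at hx
      obtain ⟨hx1, hx2⟩ := hx
      have hxc : x ∈ cover μ' := mem_cover.2 ⟨r', hr', hx2⟩
      rcases hx1 with rfl | rfl
      · exact h1 hxc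
      · exact h2 hxc
    rcases Finset.mem_insert.1 hq with rfl | hq' <;> rcases Finset.mem_insert.1 hr with rfl | hr'
    · exact absurd rfl hqr
    · exact key r hr'
    · rw [Finset.inter_comm]; exact key q hq'
    · exact hm.2 q hq' r hr' hqr

lemma dagger_term {A : Matrix (Fin n) (Fin n) R} (hA : ∀ i j, A i j = - A j i)
    {T : Finset (Fin n)} {v j : Fin n} (hv : v ∉ T) (hj : j ∈ T)
    {μ' : Finset (Fin n × Fin n)} (hm : IsMatching μ') (hc : cover μ' = T.erase j) :
    (-1 : R) ^ (crossings (insert (arcm v j) μ')) * ∏ p ∈ insert (arcm v j) μ', A p.1 p.2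
    = (-1 : R) ^ (sLT T v + sLT T j) *
        (A v j * ((-1 : R) ^ (crossings μ') * ∏ p ∈ μ', A p.1 p.2)) := by
  have hvj : v ≠ j := fun h => hv (h ▸ hj)
  have hvc : v ∉ cover μ' := by
    rw [hc]; exact fun h => hv (Finset.mem_of_mem_erase h)
  have hjc : j ∉ cover μ' := by rw [hc]; exact Finset.notMem_erase j T
  have ha12 : (arcm v j).1 < (arcm v j).2 := arcm_lt hvj
  have h1c : (arcm v j).1 ∉ cover μ' := by
    unfold arcm; split_ifs <;> assumption
  have h2c : (arcm v j).2 ∉ cover μ' := by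
    unfold arcm; split_ifs <;> assumption
  have hpμ : arcm v j ∉ μ' := (matching_insert hm ha12 h1c h2c).2
  rw [crossings_insert hpμ, Finset.prod_insert hpμ]
  have hcnt := cross_count_parity hm h1c h2c
  rw [hc] at hcnt
  rcases lt_or_gt_of_ne hvj with hlt | hlt
  · -- v < j, arcm v j = (v, j)
    have ha : arcm v j = (v, j) := by unfold arcm; simp [hlt]
    rw [ha] at hcnt ⊢
    dsimp only at hcnt ⊢
    have hjiv : ¬ (v < j ∧ j < j) := by simp [lt_irrefl]
    rw [filter_interval_erase hjiv] at hcnt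
    have hsplit := sLT_split (S := T) hlt
    rw [if_neg hv] at hsplit
    have hpow : (-1 : R) ^ (crossings μ' + (μ'.filter (fun q => xu (v, j) q)).card)
        = (-1 : R) ^ (sLT T v + sLT T j + crossings μ') := neg_one_pow_congr_mod (by omega)
    rw [hpow, pow_add, pow_add]
    ring
  · -- j < v, arcm v j = (j, v)
    have ha : arcm v j = (j, v) := by unfold arcm; simp [not_lt_of_gt hlt]
    rw [ha] at hcnt ⊢
    dsimp only at hcnt ⊢
    have hjiv : ¬ (j < j ∧ j < v) := by simp [lt_irrefl]
    rw [filter_interval_erase hjiv] at hcnt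
    have hsplit := sLT_split (S := T) hlt
    rw [if_pos hj] at hsplit
    have hpow : (-1 : R) ^ (crossings μ' + (μ'.filter (fun q => xu (j, v) q)).card)
        = (-1 : R) ^ (sLT T v + sLT T j + crossings μ' + 1) := neg_one_pow_congr_mod (by omega)
    rw [hA j v, hpow, pow_succ, pow_add, pow_add]
    ring


lemma dagger {A : Matrix (Fin n) (Fin n) R} (hA : ∀ i j, A i j = - A j i)
    {T : Finset (Fin n)} {v : Fin n} (hv : v ∉ T) :
    mpf A (insert v T)
      = ∑ j ∈ T, (-1 : R) ^ (sLT T v + sLT T j) * (A v j * mpf A (T.erase j)) := by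
  unfold mpf
  have hrw : ∀ j ∈ T, (-1 : R) ^ (sLT T v + sLT T j) *
      (A v j * ∑ μ' ∈ Finset.univ.filter
        (fun μ : Finset (Fin n × Fin n) => IsMatching μ ∧ cover μ = T.erase j),
        (-1 : R) ^ crossings μ' * ∏ p ∈ μ', A p.1 p.2)
      = ∑ μ' ∈ Finset.univ.filter
        (fun μ : Finset (Fin n × Fin n) => IsMatching μ ∧ cover μ = T.erase j),
        (-1 : R) ^ (sLT T v + sLT T j) *
          (A v j * ((-1 : R) ^ crossings μ' * ∏ p ∈ μ', A p.1 p.2)) := by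
    intro j _
    rw [Finset.mul_sum, Finset.mul_sum]
  rw [Finset.sum_congr rfl hrw, Finset.sum_sigma']
  refine (Finset.sum_bij (fun x _ => insert (arcm v x.1) x.2) ?_ ?_ ?_ ?_).symm
  · -- membership
    rintro ⟨j, μ'⟩ hx
    rw [Finset.mem_sigma, Finset.mem_filter] at hx
    obtain ⟨hj, -, hm, hc⟩ := hx
    have hvj : v ≠ j := fun h => hv (h ▸ hj)
    have hvc : v ∉ cover μ' := by rw [hc]; exact fun h => hv (Finset.mem_of_mem_erase h)
    have hjc : j ∉ cover μ' := by rw [hc]; exact Finset.notMem_erase j T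
    have h1c : (arcm v j).1 ∉ cover μ' := by unfold arcm; split_ifs <;> assumption
    have h2c : (arcm v j).2 ∉ cover μ' := by unfold arcm; split_ifs <;> assumption
    obtain ⟨hmat, -⟩ := matching_insert hm (arcm_lt hvj) h1c h2c
    rw [Finset.mem_filter]
    refine ⟨Finset.mem_univ _, hmat, ?_⟩
    have hpair : insert (arcm v j).1 (insert (arcm v j).2 (T.erase j))
        = insert v (insert j (T.erase j)) := by
      unfold arcm
      split_ifs
      · rfl
      · rw [Finset.insert_comm]
    rw [cover_insert, hc, hpair, Finset.insert_erase hj]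
  · -- injectivity
    rintro ⟨j1, μ1⟩ hx1 ⟨j2, μ2⟩ hx2 heq
    dsimp only at heq
    rw [Finset.mem_sigma, Finset.mem_filter] at hx1 hx2
    obtain ⟨hj1, -, hm1, hc1⟩ := hx1
    obtain ⟨hj2, -, hm2, hc2⟩ := hx2
    have hv1 : v ∉ cover μ1 := by rw [hc1]; exact fun h => hv (Finset.mem_of_mem_erase h)
    have hv2 : v ∉ cover μ2 := by rw [hc2]; exact fun h => hv (Finset.mem_of_mem_erase h)
    have hvj1 : v ≠ j1 := fun h => hv (h ▸ hj1)
    have hvj2 : v ≠ j2 := fun h => hv (h ▸ hj2)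
    have hend : ∀ j : Fin n, v = (arcm v j).1 ∨ v = (arcm v j).2 := by
      intro j; unfold arcm; split_ifs
      · exact Or.inl rfl
      · exact Or.inr rfl
    have ha1 : arcm v j1 ∈ insert (arcm v j2) μ2 := by
      rw [← heq]; exact Finset.mem_insert_self _ _
    rcases Finset.mem_insert.1 ha1 with he | hmem
    · have hjj : j1 = j2 := arcm_inj hvj1 hvj2 he
      subst hjj
      have hn1 : arcm v j1 ∉ μ1 := fun hin => hv1 (mem_cover.2 ⟨_, hin, hend j1⟩)
      have hn2 : arcm v j1 ∉ μ2 := fun hin => hv2 (mem_cover.2 ⟨_, hin, hend j1⟩)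
      have hμ : μ1 = μ2 := by
        rw [← Finset.erase_insert hn1, heq, Finset.erase_insert hn2]
      rw [hμ]
    · exact absurd (mem_cover.2 ⟨_, hmem, hend j1⟩) hv2
  · -- surjectivity
    intro μ hμ
    rw [Finset.mem_filter] at hμ
    obtain ⟨-, hm, hc⟩ := hμ
    have hvcov : v ∈ cover μ := by rw [hc]; exact Finset.mem_insert_self _ _
    obtain ⟨p, hp, hvp⟩ := mem_cover.1 hvcov
    have hp12 : p.1 < p.2 := hm.1 p hp
    rcases hvp with h1 | h2
    · -- v = p.1
      have hvlt : v < p.2 := by rw [h1]; exact hp12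
      have hj2T : p.2 ∈ T := by
        have hmem : p.2 ∈ cover μ := mem_cover.2 ⟨p, hp, Or.inr rfl⟩
        rw [hc] at hmem
        rcases Finset.mem_insert.1 hmem with he | h
        · exact absurd he.symm (ne_of_lt hvlt)
        · exact h
      refine ⟨⟨p.2, μ.erase p⟩, ?_, ?_⟩
      · rw [Finset.mem_sigma, Finset.mem_filter]
        refine ⟨hj2T, Finset.mem_univ _, isMatching_subset hm (Finset.erase_subset _ _), ?_⟩
        rw [cover_erase hm hp, hc, ← h1]
        ext y
        simp only [Finset.mem_sdiff, Finset.mem_insert, Finset.mem_singleton, Finset.mem_erase]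
        constructor
        · rintro ⟨hy1, hy2⟩
          push_neg at hy2
          rcases hy1 with hy1 | hy1
          · exact absurd hy1 hy2.1
          · exact ⟨hy2.2, hy1⟩
        · rintro ⟨hy1, hy2⟩
          refine ⟨Or.inr hy2, ?_⟩
          push_neg
          exact ⟨fun he => hv (he ▸ hy2), hy1⟩
      · have harc : arcm v p.2 = p := by
          unfold arcm
          rw [if_pos hvlt, Prod.ext_iff]
          exact ⟨h1, rfl⟩
        show insert (arcm v p.2) (μ.erase p) = μ
        rw [harc, Finset.insert_erase hp]
    · -- v = p.2
      have hvlt : p.1 < v := by rw [h2]; exact hp12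
      have hj1T : p.1 ∈ T := by
        have hmem : p.1 ∈ cover μ := mem_cover.2 ⟨p, hp, Or.inl rfl⟩
        rw [hc] at hmem
        rcases Finset.mem_insert.1 hmem with he | h
        · exact absurd he.symm (ne_of_gt hvlt)
        · exact h
      refine ⟨⟨p.1, μ.erase p⟩, ?_, ?_⟩
      · rw [Finset.mem_sigma, Finset.mem_filter]
        refine ⟨hj1T, Finset.mem_univ _, isMatching_subset hm (Finset.erase_subset _ _), ?_⟩
        rw [cover_erase hm hp, hc, ← h2]
        ext y
        simp only [Finset.mem_sdiff, Finset.mem_insert, Finset.mem_singleton, Finset.mem_erase]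
        constructor
        · rintro ⟨hy1, hy2⟩
          push_neg at hy2
          rcases hy1 with hy1 | hy1
          · exact absurd hy1 hy2.2
          · exact ⟨hy2.1, hy1⟩
        · rintro ⟨hy1, hy2⟩
          refine ⟨Or.inr hy2, ?_⟩
          push_neg
          exact ⟨hy1, fun he => hv (he ▸ hy2)⟩
      · have harc : arcm v p.1 = p := by
          unfold arcm
          rw [if_neg (not_lt_of_gt hvlt), Prod.ext_iff]
          exact ⟨rfl, h2⟩
        show insert (arcm v p.1) (μ.erase p) = μ
        rw [harc, Finset.insert_erase hp]
  · -- term equality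
    rintro ⟨j, μ'⟩ hx
    rw [Finset.mem_sigma, Finset.mem_filter] at hx
    obtain ⟨hj, -, hm, hc⟩ := hx
    exact (dagger_term hA hv hj hm hc).symm


lemma zeta {A : Matrix (Fin n) (Fin n) R} (hA : ∀ i j, A i j = - A j i)
    {T : Finset (Fin n)} {v : Fin n} (hv : v ∈ T) :
    ∑ j ∈ T.erase v, (-1 : R) ^ (sLT T j) * (A v j * mpf A (T.erase j)) = 0 := by
  have hrw : ∀ j ∈ T.erase v, (-1 : R) ^ (sLT T j) * (A v j * mpf A (T.erase j))
      = ∑ k ∈ (T.erase v).erase j,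
          (-1 : R) ^ (sLT T j + (sLT ((T.erase v).erase j) v + sLT ((T.erase v).erase j) k)) *
          (A v j * (A v k * mpf A (((T.erase v).erase j).erase k))) := by
    intro j hj
    have hjv : j ≠ v := (Finset.mem_erase.1 hj).1
    have hvmem : v ∈ T.erase j := Finset.mem_erase.2 ⟨fun h => hjv h.symm, hv⟩
    have hvnot : v ∉ (T.erase v).erase j :=
      fun h => (Finset.mem_erase.1 (Finset.mem_erase.1 h).2).1 rfl
    have hins : insert v ((T.erase v).erase j) = T.erase j := by
      rw [Finset.erase_right_comm]
      exact Finset.insert_erase hvmem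
    rw [← hins, dagger hA hvnot, Finset.mul_sum, Finset.mul_sum]
    refine Finset.sum_congr rfl fun k hk => ?_
    rw [pow_add]
    ring
  rw [Finset.sum_congr rfl hrw, Finset.sum_sigma']
  refine Finset.sum_involution (fun x _ => ⟨x.2, x.1⟩) ?_ ?_ ?_ ?_
  · -- f a + f (g a) = 0
    rintro ⟨j, k⟩ ha
    dsimp only
    rw [Finset.mem_sigma] at ha
    dsimp only at ha
    obtain ⟨hj, hk⟩ := ha
    have hjv : j ≠ v := (Finset.mem_erase.1 hj).1
    have hjS : j ∈ T.erase v := hj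
    have hkj : k ≠ j := (Finset.mem_erase.1 hk).1
    have hkT : k ∈ T.erase v := (Finset.mem_erase.1 hk).2
    have hkv : k ≠ v := (Finset.mem_erase.1 hkT).1
    -- sLT bookkeeping
    have e1 : sLT T j = sLT (T.erase v) j + (if v < j then 1 else 0) := sLT_erase hv j
    have e2 : sLT T k = sLT (T.erase v) k + (if v < k then 1 else 0) := sLT_erase hv k
    have e3 : sLT (T.erase v) v = sLT ((T.erase v).erase j) v + (if j < v then 1 else 0) :=
      sLT_erase hjS v
    have e4 : sLT (T.erase v) v = sLT ((T.erase v).erase k) v + (if k < v then 1 else 0) :=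
      sLT_erase hkT v
    have e5 : sLT (T.erase v) k = sLT ((T.erase v).erase j) k + (if j < k then 1 else 0) :=
      sLT_erase hjS k
    have e6 : sLT (T.erase v) j = sLT ((T.erase v).erase k) j + (if k < j then 1 else 0) :=
      sLT_erase hkT j
    have t1 : (if v < j then 1 else 0) + (if j < v then 1 else 0) = 1 := by
      rcases lt_trichotomy v j with h | h | h
      · simp [h, not_lt_of_gt h]
      · exact absurd h.symm hjv
      · simp [h, not_lt_of_gt h]
    have t2 : (if v < k then 1 else 0) + (if k < v then 1 else 0) = 1 := by
      rcases lt_trichotomy v k with h | h | h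
      · simp [h, not_lt_of_gt h]
      · exact absurd h.symm hkv
      · simp [h, not_lt_of_gt h]
    have t3 : (if j < k then 1 else 0) + (if k < j then 1 else 0) = 1 := by
      rcases lt_trichotomy j k with h | h | h
      · simp [h, not_lt_of_gt h]
      · exact absurd h.symm hkj
      · simp [h, not_lt_of_gt h]
    have hodd : ((sLT T j + (sLT ((T.erase v).erase j) v + sLT ((T.erase v).erase j) k))
        + (sLT T k + (sLT ((T.erase v).erase k) v + sLT ((T.erase v).erase k) j))) % 2 = 1 := by
      omega
    have hpow : (-1 : R) ^ (sLT T j + (sLT ((T.erase v).erase j) v + sLT ((T.erase v).erase j) k))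
        = -(-1 : R) ^ (sLT T k + (sLT ((T.erase v).erase k) v + sLT ((T.erase v).erase k) j)) := by
      have := neg_one_pow_congr_mod (R := R)
        (m := sLT T j + (sLT ((T.erase v).erase j) v + sLT ((T.erase v).erase j) k))
        (k := (sLT T k + (sLT ((T.erase v).erase k) v + sLT ((T.erase v).erase k) j)) + 1)
        (by omega)
      rw [this, pow_succ]
      ring
    have hmpf : (((T.erase v).erase j).erase k) = (((T.erase v).erase k).erase j) :=
      Finset.erase_right_comm
    rw [hpow, hmpf]
    ring
  · -- g a ≠ a
    rintro ⟨j, k⟩ ha hf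
    rw [Finset.mem_sigma] at ha
    have : k ≠ j := (Finset.mem_erase.1 ha.2).1
    intro hcontra
    rw [Sigma.ext_iff] at hcontra
    exact this (by exact_mod_cast hcontra.1)
  · -- g a ∈ s
    rintro ⟨j, k⟩ ha
    rw [Finset.mem_sigma] at ha ⊢
    obtain ⟨hj, hk⟩ := ha
    have hkj : k ≠ j := (Finset.mem_erase.1 hk).1
    refine ⟨(Finset.mem_erase.1 hk).2, Finset.mem_erase.2 ⟨fun h => hkj h.symm, hj⟩⟩
  · -- involutive
    rintro ⟨j, k⟩ ha
    rfl


lemma sd_mem_erase {X : Finset (Fin n)} {v : Fin n} (h : v ∈ X) : sd X {v} = X.erase v := by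
  ext x
  simp only [sd, Finset.mem_sdiff, Finset.mem_union, Finset.mem_inter, Finset.mem_singleton,
    Finset.mem_erase]
  have hxv : x = v → x ∈ X := fun he => he ▸ h
  tauto

lemma sd_not_mem_insert {X : Finset (Fin n)} {v : Fin n} (h : v ∉ X) : sd X {v} = insert v X := by
  ext x
  simp only [sd, Finset.mem_sdiff, Finset.mem_union, Finset.mem_inter, Finset.mem_singleton,
    Finset.mem_insert]
  have hxv : x = v → x ∉ X := fun he => he ▸ h
  tauto

lemma posSum_single {M : Finset (Fin n)} {v : Fin n} (h : v ∈ M) :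
    posSum M {v} = sLT M v + 1 := by
  unfold posSum sLT
  rw [Finset.sum_singleton]
  have key : M.filter (fun z => z ≤ v) = insert v (M.filter (fun z => z < v)) := by
    ext x
    simp only [Finset.mem_filter, Finset.mem_insert]
    constructor
    · rintro ⟨hx, hle⟩
      rcases lt_or_eq_of_le hle with h' | h'
      · exact Or.inr ⟨hx, h'⟩
      · exact Or.inl h'
    · rintro (rfl | ⟨hx, hlt⟩)
      · exact ⟨h, le_refl _⟩
      · exact ⟨hx, le_of_lt hlt⟩
  rw [key, Finset.card_insert_of_notMem (by simp [lt_irrefl])]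

lemma sLT_parity (α β : Finset (Fin n)) (v : Fin n) :
    sLT α v + sLT β v = sLT (sd α β) v + 2 * sLT (α ∩ β) v := by
  have h1 : sLT (α ∪ β) v + sLT (α ∩ β) v = sLT α v + sLT β v := by
    unfold sLT
    rw [Finset.filter_union, Finset.filter_inter_distrib]
    exact Finset.card_union_add_card_inter _ _
  have h2 : sLT (α ∪ β) v = sLT (sd α β) v + sLT (α ∩ β) v := by
    unfold sLT
    have hu : (α ∪ β) = sd α β ∪ (α ∩ β) :=
      (sdiff_union_of_subset (Finset.inter_subset_union)).symm
    rw [hu, Finset.filter_union]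
    have hd : Disjoint (sd α β) (α ∩ β) := by
      have hsd : sd α β = (α ∪ β) \ (α ∩ β) := rfl
      rw [hsd]
      exact sdiff_disjoint
    exact Finset.card_union_of_disjoint (Finset.disjoint_filter_filter hd)
  omega

theorem ohta_aux {A : Matrix (Fin n) (Fin n) R} (hA : ∀ i j, A i j = - A j i)
    (α β : Finset (Fin n)) (hαβ : α ∪ β = Finset.univ) :
    ∑ v ∈ sd α β,
      (-1 : R) ^ posSum (sd α β) {v} * (mpf A (sd α {v}) * mpf A (sd β {v})) = 0 := by
  set M := sd α β with hM
  have hmemM : ∀ x : Fin n, x ∈ M ↔ ((x ∈ α ∧ x ∉ β) ∨ (x ∈ β ∧ x ∉ α)) := by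
    intro x
    simp only [hM, sd, Finset.mem_sdiff, Finset.mem_union, Finset.mem_inter]
    tauto
  have hcompl : ∀ x : Fin n, x ∉ M → x ∈ α ∧ x ∈ β := by
    intro x hx
    have hx2 : x ∈ α ∪ β := hαβ ▸ Finset.mem_univ x
    rw [Finset.mem_union] at hx2
    rw [hmemM] at hx
    push_neg at hx
    tauto
  set aa : Fin n → R :=
    fun x => if x ∈ α then (-1 : R) ^ (sLT α x) * mpf A (α.erase x) else 0 with haa
  set bb : Fin n → R :=
    fun x => if x ∈ β then (-1 : R) ^ (sLT β x) * mpf A (β.erase x) else 0 with hbb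
  have hsumb : ∀ v : Fin n, (∑ j : Fin n, A v j * bb j)
      = ∑ j ∈ β, A v j * ((-1 : R) ^ (sLT β j) * mpf A (β.erase j)) := by
    intro v
    calc (∑ j : Fin n, A v j * bb j)
        = ∑ j : Fin n, (if j ∈ β then A v j * ((-1 : R) ^ (sLT β j) * mpf A (β.erase j)) else 0) := by
          refine Finset.sum_congr rfl fun j _ => ?_
          rw [hbb]
          dsimp only
          split_ifs with h
          · ring
          · exact mul_zero _
      _ = _ := by rw [Finset.sum_ite_mem, Finset.univ_inter]
  have hsuma : ∀ v : Fin n, (∑ j : Fin n, A v j * aa j)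
      = ∑ j ∈ α, A v j * ((-1 : R) ^ (sLT α j) * mpf A (α.erase j)) := by
    intro v
    calc (∑ j : Fin n, A v j * aa j)
        = ∑ j : Fin n, (if j ∈ α then A v j * ((-1 : R) ^ (sLT α j) * mpf A (α.erase j)) else 0) := by
          refine Finset.sum_congr rfl fun j _ => ?_
          rw [haa]
          dsimp only
          split_ifs with h
          · ring
          · exact mul_zero _
      _ = _ := by rw [Finset.sum_ite_mem, Finset.univ_inter]
  have hparity := sLT_parity α β
  have key : ∀ v ∈ M, (-1 : R) ^ posSum M {v} * (mpf A (sd α {v}) * mpf A (sd β {v}))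
      = -(aa v * (∑ j : Fin n, A v j * bb j) + bb v * (∑ j : Fin n, A v j * aa j)) := by
    intro v hv
    rw [posSum_single hv]
    rcases (hmemM v).1 hv with ⟨hva, hvb⟩ | ⟨hvb, hva⟩
    · -- v ∈ α, v ∉ β
      have hbv : bb v = 0 := by rw [hbb]; simp [hvb]
      have haav : aa v = (-1 : R) ^ (sLT α v) * mpf A (α.erase v) := by
        rw [haa]; simp [hva]
      rw [sd_mem_erase hva, sd_not_mem_insert hvb, dagger hA hvb]
      calc (-1 : R) ^ (sLT M v + 1) * (mpf A (α.erase v) *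
            ∑ j ∈ β, (-1 : R) ^ (sLT β v + sLT β j) * (A v j * mpf A (β.erase j)))
          = ∑ j ∈ β, (-1 : R) ^ (sLT M v + 1 + (sLT β v + sLT β j)) *
              (mpf A (α.erase v) * (A v j * mpf A (β.erase j))) := by
            rw [Finset.mul_sum, Finset.mul_sum]
            refine Finset.sum_congr rfl fun j _ => ?_
            rw [pow_add]
            ring
        _ = ∑ j ∈ β, -(((-1 : R) ^ (sLT α v) * mpf A (α.erase v)) *
              (A v j * ((-1 : R) ^ (sLT β j) * mpf A (β.erase j)))) := by
            refine Finset.sum_congr rfl fun j _ => ?_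
            have hp : (-1 : R) ^ (sLT M v + 1 + (sLT β v + sLT β j))
                = -((-1 : R) ^ (sLT α v) * (-1 : R) ^ (sLT β j)) := by
              rw [← pow_add,
                neg_one_pow_congr_mod (R := R)
                  (m := sLT M v + 1 + (sLT β v + sLT β j))
                  (k := sLT α v + sLT β j + 1) (by have hpv := hparity v; rw [← hM] at hpv; omega),
                pow_succ, pow_add]
              ring
            rw [hp]
            ring
        _ = -(aa v * (∑ j : Fin n, A v j * bb j) + bb v * (∑ j : Fin n, A v j * aa j)) := by
            rw [hbv, zero_mul, add_zero, haav, hsumb v, Finset.mul_sum,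
              ← Finset.sum_neg_distrib]
    · -- v ∈ β, v ∉ α
      have hav : aa v = 0 := by rw [haa]; simp [hva]
      have hbbv : bb v = (-1 : R) ^ (sLT β v) * mpf A (β.erase v) := by
        rw [hbb]; simp [hvb]
      rw [sd_mem_erase hvb, sd_not_mem_insert hva, dagger hA hva]
      calc (-1 : R) ^ (sLT M v + 1) *
            ((∑ j ∈ α, (-1 : R) ^ (sLT α v + sLT α j) * (A v j * mpf A (α.erase j))) *
              mpf A (β.erase v))
          = ∑ j ∈ α, (-1 : R) ^ (sLT M v + 1 + (sLT α v + sLT α j)) *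
              (mpf A (β.erase v) * (A v j * mpf A (α.erase j))) := by
            rw [Finset.sum_mul, Finset.mul_sum]
            refine Finset.sum_congr rfl fun j _ => ?_
            rw [pow_add]
            ring
        _ = ∑ j ∈ α, -(((-1 : R) ^ (sLT β v) * mpf A (β.erase v)) *
              (A v j * ((-1 : R) ^ (sLT α j) * mpf A (α.erase j)))) := by
            refine Finset.sum_congr rfl fun j _ => ?_
            have hp : (-1 : R) ^ (sLT M v + 1 + (sLT α v + sLT α j))
                = -((-1 : R) ^ (sLT β v) * (-1 : R) ^ (sLT α j)) := by
              rw [← pow_add,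
                neg_one_pow_congr_mod (R := R)
                  (m := sLT M v + 1 + (sLT α v + sLT α j))
                  (k := sLT β v + sLT α j + 1) (by have hpv := hparity v; rw [← hM] at hpv; omega),
                pow_succ, pow_add]
              ring
            rw [hp]
            ring
        _ = -(aa v * (∑ j : Fin n, A v j * bb j) + bb v * (∑ j : Fin n, A v j * aa j)) := by
            rw [hav, zero_mul, zero_add, hbbv, hsuma v, Finset.mul_sum,
              ← Finset.sum_neg_distrib]
  rw [Finset.sum_congr rfl key]
  have hext : ∑ v ∈ M, -(aa v * (∑ j : Fin n, A v j * bb j) + bb v * (∑ j : Fin n, A v j * aa j))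
      = ∑ v : Fin n, -(aa v * (∑ j : Fin n, A v j * bb j) + bb v * (∑ j : Fin n, A v j * aa j)) := by
    refine Finset.sum_subset (Finset.subset_univ M) ?_
    intro v _ hvM
    obtain ⟨hva, hvb⟩ := hcompl v hvM
    have hb : (∑ j : Fin n, A v j * bb j) = A v v * bb v := by
      rw [hsumb v, ← Finset.sum_erase_add β _ hvb]
      have hz : ∑ j ∈ β.erase v, A v j * ((-1 : R) ^ (sLT β j) * mpf A (β.erase j)) = 0 := by
        rw [← zeta hA hvb]
        exact Finset.sum_congr rfl fun j _ => by ring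
      rw [hz, zero_add, hbb]
      simp only [if_pos hvb]
    have ha' : (∑ j : Fin n, A v j * aa j) = A v v * aa v := by
      rw [hsuma v, ← Finset.sum_erase_add α _ hva]
      have hz : ∑ j ∈ α.erase v, A v j * ((-1 : R) ^ (sLT α j) * mpf A (α.erase j)) = 0 := by
        rw [← zeta hA hva]
        exact Finset.sum_congr rfl fun j _ => by ring
      rw [hz, zero_add, haa]
      simp only [if_pos hva]
    rw [hb, ha']
    have h2A : A v v + A v v = 0 := by
      nth_rewrite 2 [hA v v]
      exact add_neg_cancel _
    calc -(aa v * (A v v * bb v) + bb v * (A v v * aa v))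
        = -((A v v + A v v) * (aa v * bb v)) := by ring
      _ = 0 := by rw [h2A, zero_mul, neg_zero]
  rw [hext]
  have h1 : ∑ v : Fin n, aa v * (∑ j : Fin n, A v j * bb j)
      = ∑ v : Fin n, ∑ j : Fin n, A v j * (aa v * bb j) := by
    refine Finset.sum_congr rfl fun v _ => ?_
    rw [Finset.mul_sum]
    exact Finset.sum_congr rfl fun j _ => by ring
  have h2 : ∑ v : Fin n, bb v * (∑ j : Fin n, A v j * aa j)
      = -∑ v : Fin n, ∑ j : Fin n, A v j * (aa v * bb j) := by
    calc ∑ v : Fin n, bb v * (∑ j : Fin n, A v j * aa j)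
        = ∑ v : Fin n, ∑ j : Fin n, -(A j v * (aa j * bb v)) := by
          refine Finset.sum_congr rfl fun v _ => ?_
          rw [Finset.mul_sum]
          refine Finset.sum_congr rfl fun j _ => ?_
          rw [hA v j]
          ring
      _ = -∑ v : Fin n, ∑ j : Fin n, A j v * (aa j * bb v) := by
          simp only [Finset.sum_neg_distrib]
      _ = -∑ v : Fin n, ∑ j : Fin n, A v j * (aa v * bb j) := by rw [Finset.sum_comm]
  calc ∑ v : Fin n, -(aa v * (∑ j : Fin n, A v j * bb j) + bb v * (∑ j : Fin n, A v j * aa j))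
      = -((∑ v : Fin n, aa v * (∑ j : Fin n, A v j * bb j))
          + ∑ v : Fin n, bb v * (∑ j : Fin n, A v j * aa j)) := by
        simp only [neg_add, Finset.sum_add_distrib, Finset.sum_neg_distrib]
    _ = 0 := by rw [h1, h2, add_neg_cancel, neg_zero]

end Ohta

/-- **Ohta's theorem.** For a skew-symmetric matrix `A` indexed by the ordered set
`γ = Fin n`, subsets `α, β` with `α ∪ β = γ`, and `M = α △ β` the symmetric
difference, the alternating sum `∑_{τ=1}^{t} (−1)^τ Pf(α △ {v_{i_τ}}) Pf(β △ {v_{i_τ}})`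
over the elements `v_{i_τ}` of `M` (in increasing order) vanishes. -/
theorem ohta_pfaffian_identity {n : ℕ} {R : Type*} [CommRing R]
    (A : Matrix (Fin n) (Fin n) R) (hA : ∀ i j, A i j = - A j i)
    (α β : Finset (Fin n)) (hαβ : α ∪ β = Finset.univ) :
    ∑ v ∈ sd α β,
      (-1 : R) ^ posSum (sd α β) {v} * (mpf A (sd α {v}) * mpf A (sd β {v})) = 0 :=
  ohta_aux hA α β hαβ
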